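/- Let σ be a stopping time with values in [0,T], let (B_n)_{n≥1} be a countable partition of Ω with B_n ∈ F_σ for every n, and let (M^n)_{n≥1} be right-continuous supermartingales with M^n_0 = 0 for all n. Define the pasted process M̄_t := M^1_{t∧σ} + Σ_{n≥1} 1_{B_n} (M^n_{t∨σ} − M^n_σ) for t ∈ [0,T], and assume M̄_t is integrable for every t ∈ [0,T]. Then M̄ is a supermartingale with M̄_0 = 0. -/

import Mathlib

open MeasureTheory Filter Topology
open scoped ENNReal NNReal

namespace PastingAux

/-- dyadic upper approximation of a real number -/
noncomputable def cl (k : ℕ) (r : ℝ) : ℝ := (⌈r * 2 ^ k⌉ : ℤ) / 2 ^ k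

lemma two_pow_pos (k : ℕ) : (0:ℝ) < 2 ^ k := by positivity

lemma le_cl (k : ℕ) (r : ℝ) : r ≤ cl k r := by
  rw [cl, le_div_iff₀ (two_pow_pos k)]
  exact Int.le_ceil _

lemma cl_le (k : ℕ) (r : ℝ) : cl k r ≤ r + ((2:ℝ) ^ k)⁻¹ := by
  rw [cl, div_le_iff₀ (two_pow_pos k), add_mul, inv_mul_cancel₀ (two_pow_pos k).ne']
  exact (Int.ceil_lt_add_one _).le

lemma cl_mono (k : ℕ) : Monotone (cl k) := by
  intro a b hab
  have : (⌈a * 2 ^ k⌉ : ℤ) ≤ ⌈b * 2 ^ k⌉ :=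
    Int.ceil_mono (by nlinarith [two_pow_pos k])
  rw [cl, cl]
  gcongr


lemma cl_succ_le (k : ℕ) (r : ℝ) : cl (k + 1) r ≤ cl k r := by
  have h1 : (⌈r * 2 ^ (k+1)⌉ : ℤ) ≤ 2 * ⌈r * 2 ^ k⌉ := by
    rw [Int.ceil_le]
    push_cast
    have h := Int.le_ceil (r * 2 ^ k)
    calc r * 2 ^ (k+1) = 2 * (r * 2 ^ k) := by rw [pow_succ]; ring
      _ ≤ 2 * (⌈r * 2 ^ k⌉ : ℤ) := by linarith
  rw [cl, cl, div_le_div_iff₀ (two_pow_pos (k+1)) (two_pow_pos k)]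
  have h2 : ((⌈r * 2 ^ (k+1)⌉ : ℤ) : ℝ) ≤ 2 * (⌈r * 2 ^ k⌉ : ℤ) := by exact_mod_cast h1
  calc ((⌈r * 2 ^ (k+1)⌉ : ℤ) : ℝ) * 2 ^ k ≤ (2 * (⌈r * 2 ^ k⌉ : ℤ)) * 2 ^ k :=
        mul_le_mul_of_nonneg_right h2 (two_pow_pos k).le
    _ = ((⌈r * 2 ^ k⌉ : ℤ) : ℝ) * 2 ^ (k+1) := by rw [pow_succ]; ring

lemma cl_antitone (r : ℝ) : Antitone (fun k => cl k r) :=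
  antitone_nat_of_succ_le (fun k => cl_succ_le k r)

lemma cl_le_iff {k : ℕ} {r u : ℝ} : cl k r ≤ u ↔ r ≤ (⌊u * 2 ^ k⌋ : ℤ) / 2 ^ k := by
  rw [cl, div_le_iff₀ (two_pow_pos k), le_div_iff₀ (two_pow_pos k)]
  constructor
  · intro h
    have h2 : (⌈r * 2 ^ k⌉ : ℤ) ≤ ⌊u * 2 ^ k⌋ := Int.le_floor.mpr h
    exact le_trans (Int.le_ceil _) (by exact_mod_cast h2)
  · intro h
    have h2 : (⌈r * 2 ^ k⌉ : ℤ) ≤ ⌊u * 2 ^ k⌋ := Int.ceil_le.mpr h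
    exact le_trans (by exact_mod_cast h2) (Int.floor_le _)

lemma tendsto_cl (r : ℝ) : Tendsto (fun k => cl k r) atTop (nhds r) := by
  have h1 : Tendsto (fun k : ℕ => r + ((2:ℝ) ^ k)⁻¹) atTop (nhds (r + 0)) := by
    refine tendsto_const_nhds.add ?_
    exact (tendsto_pow_atTop_nhds_zero_of_lt_one (by norm_num : (0:ℝ) ≤ 2⁻¹)
      (by norm_num : (2:ℝ)⁻¹ < 1)).congr (fun k => by rw [inv_pow])
  rw [add_zero] at h1
  exact tendsto_of_tendsto_of_tendsto_of_le_of_le tendsto_const_nhds h1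
    (fun k => le_cl k r) (fun k => cl_le k r)

lemma tendsto_cl_within (r : ℝ) : Tendsto (fun k => cl k r) atTop (nhdsWithin r (Set.Ici r)) := by
  refine tendsto_nhdsWithin_of_tendsto_nhds_of_eventually_within _ (tendsto_cl r) ?_
  exact Eventually.of_forall (fun k => le_cl k r)

/-- composition with a countable-range measurable time change is measurable -/
lemma measurable_comp_countable_range {α : Type*} [MeasurableSpace α]
    {q : α → ℝ} (hq : Measurable q) (hcount : (Set.range q).Countable)
    {G : ℝ → α → ℝ} (hG : ∀ v ∈ Set.range q, Measurable (G v)) :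
    Measurable (fun a => G (q a) a) := by
  intro S hS
  have : (fun a => G (q a) a) ⁻¹' S = ⋃ v ∈ Set.range q, (q ⁻¹' {v} ∩ (G v) ⁻¹' S) := by
    ext a
    simp only [Set.mem_preimage, Set.mem_iUnion, Set.mem_inter_iff, Set.mem_singleton_iff]
    constructor
    · intro h; exact ⟨q a, Set.mem_range_self a, rfl, h⟩
    · rintro ⟨v, _, rfl, h⟩; exact h
  rw [this]
  exact MeasurableSet.biUnion hcount
    (fun v hv => (hq (measurableSet_singleton v)).inter (hG v hv hS))

/-- absolute continuity of the integral of an integrable function -/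
lemma exists_pos_absCont {Ω : Type*} {m0 : MeasurableSpace Ω} {μ : Measure Ω}
    {h : Ω → ℝ} (hint : Integrable h μ) {ε : ℝ} (hε : 0 < ε) :
    ∃ δ : ℝ≥0∞, 0 < δ ∧ ∀ S : Set Ω, MeasurableSet S → μ S < δ →
      ∫ ω in S, |h ω| ∂μ ≤ ε := by
  have hfin : ∫⁻ ω, ‖h ω‖₊ ∂μ ≠ ⊤ := hint.2.ne
  obtain ⟨δ, hδ0, hδ⟩ := exists_pos_setLIntegral_lt_of_measure_lt hfin
    (ε := ENNReal.ofReal ε) (ENNReal.ofReal_pos.mpr hε).ne'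
  refine ⟨δ, hδ0, fun S hS hμS => ?_⟩
  have h1 : ∫ ω in S, |h ω| ∂μ = (∫⁻ ω in S, ‖h ω‖₊ ∂μ).toReal := by
    simp only [← enorm_eq_nnnorm]
    rw [← ofReal_integral_norm_eq_lintegral_enorm (hint.integrableOn (s := S)),
      ENNReal.toReal_ofReal (by positivity)]
    simp [Real.norm_eq_abs]
  rw [h1]
  calc (∫⁻ ω in S, ‖h ω‖₊ ∂μ).toReal ≤ (ENNReal.ofReal ε).toReal :=
        ENNReal.toReal_mono (by simp) (hδ S hμS).le
    _ = ε := ENNReal.toReal_ofReal hε.le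

section StopAPI
variable {Ω : Type*} {m0 : MeasurableSpace Ω}

/-- real-valued stopping time -/
def IsStoppingTime (f : Filtration ℝ m0) (τ : Ω → ℝ) : Prop :=
  ∀ i : ℝ, MeasurableSet[f i] {ω | τ ω ≤ i}

/-- value of a process at a real-valued random time -/
def stoppedValue {β : Type*} (u : ℝ → Ω → β) (τ : Ω → ℝ) : Ω → β := fun ω => u (τ ω) ω

theorem stoppedValue_const {β : Type*} (u : ℝ → Ω → β) (i : ℝ) :
    (stoppedValue u fun _ => i) = u i := rfl

theorem isStoppingTime_const (f : Filtration ℝ m0) (i : ℝ) : IsStoppingTime f (fun _ : Ω => i) :=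
  fun _ => MeasurableSet.const _

namespace IsStoppingTime
variable {f : Filtration ℝ m0} {τ π : Ω → ℝ}

theorem wt (h : IsStoppingTime f τ) :
    MeasureTheory.IsStoppingTime f (fun ω => (τ ω : WithTop ℝ)) := by
  intro i
  simp only [WithTop.coe_le_coe]
  exact h i

theorem of_wt (h : MeasureTheory.IsStoppingTime f (fun ω => (τ ω : WithTop ℝ))) :
    IsStoppingTime f τ := fun i => by
  have := h i
  simp only [WithTop.coe_le_coe] at this
  exact this

theorem measurableSet_le (h : IsStoppingTime f τ) (i : ℝ) :
    MeasurableSet[f i] {ω | τ ω ≤ i} := h i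

theorem measurableSet_lt (h : IsStoppingTime f τ) (i : ℝ) :
    MeasurableSet[f i] {ω | τ ω < i} := by
  have := h.wt.measurableSet_lt i
  simp only [WithTop.coe_lt_coe] at this
  exact this

/-- the σ-algebra of a real-valued stopping time -/
def measurableSpace (h : IsStoppingTime f τ) : MeasurableSpace Ω := h.wt.measurableSpace

theorem measurableSpace_le (h : IsStoppingTime f τ) : h.measurableSpace ≤ m0 :=
  h.wt.measurableSpace_le

theorem measurableSet_le' (h : IsStoppingTime f τ) (i : ℝ) :
    MeasurableSet[h.measurableSpace] {ω | τ ω ≤ i} := by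
  have := h.wt.measurableSet_le' i
  simp only [WithTop.coe_le_coe] at this
  exact this

theorem measurableSet (h : IsStoppingTime f τ) (s : Set Ω) :
    MeasurableSet[h.measurableSpace] s ↔ ∀ i : ℝ, MeasurableSet[f i] (s ∩ {ω | τ ω ≤ i}) := by
  change MeasurableSet[⨆ t, f t] s ∧
    (∀ i : ℝ, MeasurableSet[f i] (s ∩ {ω | ((τ ω : ℝ) : WithTop ℝ) ≤ ((i : ℝ) : WithTop ℝ)})) ↔ _
  simp only [WithTop.coe_le_coe]
  constructor
  · exact fun hs => hs.2
  · intro hs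
    refine ⟨?_, hs⟩
    have e : s = ⋃ n : ℕ, s ∩ {ω | τ ω ≤ n} := by
      ext ω
      simp only [Set.mem_iUnion, Set.mem_inter_iff, Set.mem_setOf_eq]
      exact ⟨fun h => ⟨(exists_nat_ge (τ ω)).choose, h, (exists_nat_ge (τ ω)).choose_spec⟩,
        fun ⟨_, h, _⟩ => h⟩
    rw [e]
    exact MeasurableSet.iUnion fun n => (le_iSup (fun t => f t) (n : ℝ)) _ (hs n)

theorem min_const (h : IsStoppingTime f τ) (i : ℝ) : IsStoppingTime f (fun ω => min (τ ω) i) := by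
  intro j
  simp only [min_le_iff, Set.setOf_or]
  exact (h j).union (MeasurableSet.const _)

theorem max_const (h : IsStoppingTime f τ) (i : ℝ) : IsStoppingTime f (fun ω => max (τ ω) i) := by
  intro j
  simp only [max_le_iff, Set.setOf_and]
  exact (h j).inter (MeasurableSet.const _)

theorem measurableSpace_mono (hτ : IsStoppingTime f τ) (hπ : IsStoppingTime f π) (hle : τ ≤ π) :
    hτ.measurableSpace ≤ hπ.measurableSpace :=
  MeasureTheory.IsStoppingTime.measurableSpace_mono hτ.wt hπ.wt
    (fun ω => WithTop.coe_le_coe.mpr (hle ω))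

theorem le_measurableSpace_of_const_le (h : IsStoppingTime f τ) {i : ℝ} (hle : ∀ ω, i ≤ τ ω) :
    f i ≤ h.measurableSpace :=
  h.wt.le_measurableSpace_of_const_le (fun ω => WithTop.coe_le_coe.mpr (hle ω))

end IsStoppingTime

theorem integrable_stoppedValue_of_mem_finset {μ : Measure Ω} {f : Filtration ℝ m0}
    {τ : Ω → ℝ} {u : ℝ → Ω → ℝ} (hτ : IsStoppingTime f τ) (hu : ∀ n, Integrable (u n) μ)
    {s : Finset ℝ} (hbdd : ∀ ω, τ ω ∈ s) : Integrable (stoppedValue u τ) μ := by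
  have := MeasureTheory.integrable_stoppedValue_of_mem_finset hτ.wt hu
    (fun ω => ⟨τ ω, hbdd ω, rfl⟩)
  exact this

theorem measurable_stoppedValue {f : Filtration ℝ m0} {τ : Ω → ℝ} {u : ℝ → Ω → ℝ}
    (hf : IsStronglyProgressive f u) (hτ : IsStoppingTime f τ) :
    Measurable[hτ.measurableSpace] (stoppedValue u τ) := by
  have := MeasureTheory.measurable_stoppedValue hf hτ.wt
  exact this

theorem stronglyMeasurable_stoppedValue_of_le {f : Filtration ℝ m0} {τ : Ω → ℝ}
    {u : ℝ → Ω → ℝ} (hf : IsStronglyProgressive f u) (hτ : IsStoppingTime f τ) {n : ℝ}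
    (hle : ∀ ω, τ ω ≤ n) : StronglyMeasurable[f n] (stoppedValue u τ) := by
  have := MeasureTheory.stronglyMeasurable_stoppedValue_of_le hf hτ.wt
    (fun ω => WithTop.coe_le_coe.mpr (hle ω))
  exact this

end StopAPI

end PastingAux
namespace PastingAux

variable {Ω : Type*} {m0 : MeasurableSpace Ω} {μ : MeasureTheory.Measure Ω}
  {ℱ : MeasureTheory.Filtration ℝ m0} {N : ℝ → Ω → ℝ}

open MeasureTheory

/-- A globally defined right-continuous supermartingale (set-integral form). -/
structure Nice (ℱ : Filtration ℝ m0) (μ : Measure Ω) (N : ℝ → Ω → ℝ) : Prop where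
  adp : ∀ t, StronglyMeasurable[ℱ t] (N t)
  int : ∀ t, Integrable (N t) μ
  rc : ∀ ω t, ContinuousWithinAt (fun s => N s ω) (Set.Ici t) t
  super : ∀ u v : ℝ, u ≤ v → ∀ E : Set Ω, MeasurableSet[ℱ u] E →
    ∫ ω in E, N v ω ∂μ ≤ ∫ ω in E, N u ω ∂μ

theorem Nice.progMeasurable (hN : Nice ℱ μ N) : ProgMeasurable ℱ N := by
  intro t
  letI mm : MeasurableSpace (Set.Iic t × Ω) := Subtype.instMeasurableSpace.prod (ℱ t)
  have key : ∀ k : ℕ, StronglyMeasurable[mm]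
      (fun p : Set.Iic t × Ω => N (min t (cl k (p.1 : ℝ))) p.2) := by
    intro k
    apply Measurable.stronglyMeasurable
    have hclm : Measurable (cl k) := (cl_mono k).measurable
    have hq : Measurable[mm] (fun p : Set.Iic t × Ω => min t (cl k (p.1 : ℝ))) :=
      measurable_const.min ((hclm.comp measurable_subtype_coe).comp measurable_fst)
    have hcount : (Set.range (fun p : Set.Iic t × Ω => min t (cl k (p.1 : ℝ)))).Countable := by
      have hsub : Set.range (fun p : Set.Iic t × Ω => min t (cl k (p.1 : ℝ))) ⊆
          insert t (Set.range (fun z : ℤ => ((z : ℝ) / 2 ^ k))) := by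
        rintro x ⟨p, rfl⟩
        show min t (cl k (p.1 : ℝ)) ∈ _
        rcases le_total t (cl k (p.1 : ℝ)) with h | h
        · rw [min_eq_left h]; exact Set.mem_insert _ _
        · rw [min_eq_right h]
          exact Set.mem_insert_of_mem _ ⟨⌈(p.1 : ℝ) * 2 ^ k⌉, rfl⟩
      exact ((Set.countable_range _).insert t).mono hsub
    refine measurable_comp_countable_range (G := fun v p => N v p.2) hq hcount (fun v hv => ?_)
    obtain ⟨p, hp⟩ := hv
    have hvt : v ≤ t := by rw [← hp]; exact min_le_left _ _
    exact (((hN.adp v).mono (ℱ.mono hvt)).measurable).comp measurable_snd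
  refine stronglyMeasurable_of_tendsto atTop key ?_
  rw [tendsto_pi_nhds]
  intro p
  have hmem : ∀ k, min t (cl k (p.1 : ℝ)) ∈ Set.Ici (p.1 : ℝ) :=
    fun k => le_min p.1.2 (le_cl k _)
  have htd : Tendsto (fun k => min t (cl k (p.1 : ℝ))) atTop (nhds (p.1 : ℝ)) := by
    have := tendsto_const_nhds (x := t) (f := atTop (α := ℕ)) |>.min (tendsto_cl (p.1 : ℝ))
    rwa [min_eq_right (p.1.2 : (p.1 : ℝ) ≤ t)] at this
  have htdw : Tendsto (fun k => min t (cl k (p.1 : ℝ))) atTop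
      (nhdsWithin (p.1 : ℝ) (Set.Ici (p.1 : ℝ))) :=
    tendsto_nhdsWithin_of_tendsto_nhds_of_eventually_within _ htd
      (Eventually.of_forall hmem)
  exact ((hN.rc p.2 (p.1 : ℝ)).tendsto).comp htdw

theorem isStoppingTime_cl {τ : Ω → ℝ} (hτ : IsStoppingTime ℱ τ) (k : ℕ) :
    IsStoppingTime ℱ (fun ω => cl k (τ ω)) := by
  intro u
  have hset : {ω | cl k (τ ω) ≤ u} = {ω | τ ω ≤ ((⌊u * 2 ^ k⌋ : ℤ) : ℝ) / 2 ^ k} := by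
    ext ω; exact cl_le_iff
  have hle : ((⌊u * 2 ^ k⌋ : ℤ) : ℝ) / 2 ^ k ≤ u := by
    rw [div_le_iff₀ (two_pow_pos k)]; exact Int.floor_le _
  rw [hset]
  exact ℱ.mono hle _ (hτ.measurableSet_le _)

theorem cl_mem_finset {R : ℝ} (k : ℕ) {r : ℝ} (h0 : 0 ≤ r) (hR : r ≤ R) :
    cl k r ∈ (Finset.Icc (0 : ℤ) ⌈R * 2 ^ k⌉).image (fun z : ℤ => (z : ℝ) / 2 ^ k) := by
  refine Finset.mem_image.mpr ⟨⌈r * 2 ^ k⌉, Finset.mem_Icc.mpr ⟨?_, ?_⟩, rfl⟩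
  · exact Int.ceil_nonneg (by positivity)
  · exact Int.ceil_mono (mul_le_mul_of_nonneg_right hR (two_pow_pos k).le)

theorem Nice.stepDown [IsProbabilityMeasure μ] (hN : Nice ℱ μ N) {v : ℝ} {D : Set Ω}
    (hD : MeasurableSet[ℱ v] D) {ρ : Ω → ℝ} {s : Finset ℝ}
    (hρ : IsStoppingTime ℱ ρ) (hs : ∀ ω, ρ ω ∈ s) (hvle : ∀ ω ∈ D, v ≤ ρ ω) :
    ∫ ω in D, stoppedValue N ρ ω ∂μ ≤ ∫ ω in D, N v ω ∂μ := by
  classical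
  obtain ⟨ω0⟩ : Nonempty Ω := by
    by_contra hne
    rw [not_nonempty_iff] at hne
    have h1 : μ Set.univ = 1 := measure_univ
    rw [Set.univ_eq_empty_iff.mpr hne, measure_empty] at h1
    simp at h1
  have hDm0 : MeasurableSet D := ℱ.le v _ hD
  induction' hn : s.card using Nat.strong_induction_on with c ih generalizing ρ s
  subst hn
  rcases Finset.eq_empty_or_nonempty s with rfl | hsne
  · exact absurd (hs ω0) (by simp)
  set w := s.max' hsne with hw
  have hmemw : w ∈ s := s.max'_mem hsne
  rcases Finset.eq_empty_or_nonempty (s.erase w) with herase | herasene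
  · have hsw : ∀ ω, ρ ω = w := by
      intro ω
      by_contra hne
      have : ρ ω ∈ s.erase w := Finset.mem_erase.mpr ⟨hne, hs ω⟩
      rw [herase] at this
      simp at this
    have hsveq : stoppedValue N ρ = N w := funext fun ω => by
      rw [stoppedValue, hsw]
    rw [hsveq]
    rcases Set.eq_empty_or_nonempty D with rfl | ⟨ωD, hωD⟩
    · simp
    · exact hN.super v w ((hvle ωD hωD).trans_eq (hsw ωD)) D hD
  · set w' := (s.erase w).max' herasene with hw'
    have hw'mem : w' ∈ s.erase w := (s.erase w).max'_mem herasene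
    have hw'w : w' < w :=
      lt_of_le_of_ne (s.le_max' w' (Finset.mem_of_mem_erase hw'mem))
        (Finset.ne_of_mem_erase hw'mem)
    have hmem_le : ∀ x ∈ s, x ≠ w → x ≤ w' := fun x hx hxw =>
      (s.erase w).le_max' x (Finset.mem_erase.mpr ⟨hxw, hx⟩)
    have hint_ρ : Integrable (stoppedValue N ρ) μ :=
      integrable_stoppedValue_of_mem_finset hρ hN.int hs
    rcases le_or_gt v w' with hvw' | hw'v
    · -- main inductive step
      have hρ' : IsStoppingTime ℱ (fun ω => min (ρ ω) w') := hρ.min_const w'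
      have hs' : ∀ ω, min (ρ ω) w' ∈ s.erase w := by
        intro ω
        rcases le_total (ρ ω) w' with h | h
        · rw [min_eq_left h]
          exact Finset.mem_erase.mpr ⟨ne_of_lt (lt_of_le_of_lt h hw'w), hs ω⟩
        · rw [min_eq_right h]; exact hw'mem
      have hcard : (s.erase w).card < s.card := Finset.card_erase_lt_of_mem hmemw
      have ihapp := ih _ hcard hρ' hs' (fun ω hω => le_min (hvle ω hω) hvw') rfl
      have hint_ρ' : Integrable (stoppedValue N (fun ω => min (ρ ω) w')) μ :=
        integrable_stoppedValue_of_mem_finset hρ' hN.int hs'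
      have hEm0 : MeasurableSet {ω | w' < ρ ω} := by
        have : {ω | w' < ρ ω} = {ω | ρ ω ≤ w'}ᶜ := by ext ω; simp
        rw [this]
        exact (ℱ.le w' _ (hρ w')).compl
      have hindint : Integrable ({ω | w' < ρ ω}.indicator (fun ω => N w ω - N w' ω)) μ :=
        (((hN.int w).sub (hN.int w')).indicator hEm0)
      have hkey : stoppedValue N ρ = fun ω => stoppedValue N (fun ω' => min (ρ ω') w') ω
          + {ω' | w' < ρ ω'}.indicator (fun ω'' => N w ω'' - N w' ω'') ω := by
        funext ω
        by_cases h : w' < ρ ω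
        · have hρw : ρ ω = w := by
            by_contra hne
            exact absurd (hmem_le _ (hs ω) hne) (not_le.mpr h)
          simp only [stoppedValue, Set.indicator_apply, Set.mem_setOf_eq, if_pos h, hρw,
            min_eq_right hw'w.le]
          rw [if_pos hw'w]
          ring
        · simp only [stoppedValue, Set.indicator_apply, Set.mem_setOf_eq, if_neg h,
            min_eq_left (not_lt.mp h), add_zero]
      have hE : MeasurableSet[ℱ w'] (D ∩ {ω | w' < ρ ω}) := by
        have hcompl : {ω | w' < ρ ω} = {ω | ρ ω ≤ w'}ᶜ := by ext ω; simp
        exact (ℱ.mono hvw' _ hD).inter (hcompl ▸ (hρ w').compl)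
      calc ∫ ω in D, stoppedValue N ρ ω ∂μ
          = ∫ ω in D, stoppedValue N (fun ω' => min (ρ ω') w') ω ∂μ
            + ∫ ω in D, {ω' | w' < ρ ω'}.indicator (fun ω'' => N w ω'' - N w' ω'') ω ∂μ := by
            rw [hkey, integral_add hint_ρ'.integrableOn hindint.integrableOn]
        _ = ∫ ω in D, stoppedValue N (fun ω' => min (ρ ω') w') ω ∂μ
            + ∫ ω in D ∩ {ω' | w' < ρ ω'}, (N w ω - N w' ω) ∂μ := by
            rw [setIntegral_indicator hEm0]
        _ ≤ ∫ ω in D, stoppedValue N (fun ω' => min (ρ ω') w') ω ∂μ + 0 := by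
            gcongr
            rw [integral_sub ((hN.int w).integrableOn) ((hN.int w').integrableOn), sub_nonpos]
            exact hN.super w' w hw'w.le _ hE
        _ = ∫ ω in D, stoppedValue N (fun ω' => min (ρ ω') w') ω ∂μ := add_zero _
        _ ≤ ∫ ω in D, N v ω ∂μ := ihapp
    · -- degenerate case : v > w', so ρ = w on D
      have hρw : ∀ ω ∈ D, ρ ω = w := by
        intro ω hω
        by_contra hne
        exact absurd (hmem_le _ (hs ω) hne) (not_le.mpr (lt_of_lt_of_le hw'v (hvle ω hω)))
      have heq : ∫ ω in D, stoppedValue N ρ ω ∂μ = ∫ ω in D, N w ω ∂μ :=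
        setIntegral_congr_fun hDm0 (fun ω hω => by rw [stoppedValue, hρw ω hω])
      rw [heq]
      rcases Set.eq_empty_or_nonempty D with rfl | ⟨ωD, hωD⟩
      · simp
      · exact hN.super v w ((hvle ωD hωD).trans_eq (hρw ωD hωD)) D hD

end PastingAux
namespace PastingAux

variable {Ω : Type*} {m0 : MeasurableSpace Ω} {μ : MeasureTheory.Measure Ω}
  {ℱ : MeasureTheory.Filtration ℝ m0} {N : ℝ → Ω → ℝ}

open MeasureTheory

theorem Nice.discreteOS [IsProbabilityMeasure μ] (hN : Nice ℱ μ N) {η₁ η₂ : Ω → ℝ}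
    (h1 : IsStoppingTime ℱ η₁) (h2 : IsStoppingTime ℱ η₂) (hle : ∀ ω, η₁ ω ≤ η₂ ω)
    {s : Finset ℝ} (hs1 : ∀ ω, η₁ ω ∈ s) (hs2 : ∀ ω, η₂ ω ∈ s)
    {C : Set Ω} (hC : MeasurableSet[h1.measurableSpace] C) :
    ∫ ω in C, stoppedValue N η₂ ω ∂μ ≤ ∫ ω in C, stoppedValue N η₁ ω ∂μ := by
  classical
  have hint2 : Integrable (stoppedValue N η₂) μ :=
    integrable_stoppedValue_of_mem_finset h2 hN.int hs2
  have hint1 : Integrable (stoppedValue N η₁) μ :=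
    integrable_stoppedValue_of_mem_finset h1 hN.int hs1
  have hDv : ∀ v : ℝ, MeasurableSet[ℱ v] (C ∩ {ω | η₁ ω = v}) := by
    intro v
    have e : C ∩ {ω | η₁ ω = v} = (C ∩ {ω | η₁ ω ≤ v}) ∩ {ω | η₁ ω < v}ᶜ := by
      ext ω
      simp only [Set.mem_inter_iff, Set.mem_setOf_eq, Set.mem_compl_iff, not_lt]
      constructor
      · rintro ⟨hc, hv⟩; exact ⟨⟨hc, hv.le⟩, hv.ge⟩
      · rintro ⟨⟨hc, ha⟩, hb⟩; exact ⟨hc, le_antisymm ha hb⟩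
    rw [e]
    exact ((h1.measurableSet _).mp hC v).inter (h1.measurableSet_lt v).compl
  have hDm0 : ∀ v : ℝ, MeasurableSet (C ∩ {ω | η₁ ω = v}) := fun v => ℱ.le v _ (hDv v)
  have hcover : C = ⋃ v ∈ s, (C ∩ {ω | η₁ ω = v}) := by
    ext ω
    simp only [Set.mem_iUnion, Set.mem_inter_iff, Set.mem_setOf_eq]
    constructor
    · intro hc; exact ⟨η₁ ω, hs1 ω, hc, rfl⟩
    · rintro ⟨v, _, hc, _⟩; exact hc
  have hdisj : (↑s : Set ℝ).Pairwise (Function.onFun Disjoint (fun v => C ∩ {ω | η₁ ω = v})) := by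
    intro v _ u _ hvu
    refine Set.disjoint_left.mpr ?_
    rintro ω ⟨_, hv⟩ ⟨_, hu⟩
    exact hvu (hv.symm.trans hu)
  have hsplit : ∀ g : Ω → ℝ, Integrable g μ →
      ∫ ω in C, g ω ∂μ = ∑ v ∈ s, ∫ ω in C ∩ {ω | η₁ ω = v}, g ω ∂μ := by
    intro g hg
    conv_lhs => rw [hcover]
    exact integral_biUnion_finset s (fun v _ => hDm0 v) hdisj (fun v _ => hg.integrableOn)
  rw [hsplit _ hint2, hsplit _ hint1]
  apply Finset.sum_le_sum
  intro v _
  have hsvv : ∫ ω in C ∩ {ω | η₁ ω = v}, stoppedValue N η₁ ω ∂μ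
      = ∫ ω in C ∩ {ω | η₁ ω = v}, N v ω ∂μ :=
    setIntegral_congr_fun (hDm0 v) (fun ω hω => by rw [stoppedValue, hω.2])
  rw [hsvv]
  exact hN.stepDown (hDv v) h2 hs2 (fun ω hω => le_of_eq_of_le hω.2.symm (hle ω))

end PastingAux
namespace PastingAux

variable {Ω : Type*} {m0 : MeasurableSpace Ω} {μ : MeasureTheory.Measure Ω}
  {ℱ : MeasureTheory.Filtration ℝ m0} {N : ℝ → Ω → ℝ}

open MeasureTheory Filter Topology
open scoped ENNReal

set_option maxHeartbeats 1000000 in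
theorem Nice.sv_L1 [IsProbabilityMeasure μ] (hN : Nice ℱ μ N)
    {τ : Ω → ℝ} (hτ : IsStoppingTime ℱ τ) {R : ℝ}
    (hτ0 : ∀ ω, 0 ≤ τ ω) (hτR : ∀ ω, τ ω ≤ R) :
    Integrable (stoppedValue N τ) μ ∧
      Tendsto (fun k => ∫ ω, |stoppedValue N (fun ω' => cl k (τ ω')) ω - stoppedValue N τ ω| ∂μ)
        atTop (nhds 0) := by
  classical
  set X : ℕ → Ω → ℝ := fun k => stoppedValue N (fun ω => cl k (τ ω)) with hX
  have hτk : ∀ k, IsStoppingTime ℱ (fun ω => cl k (τ ω)) := fun k => isStoppingTime_cl hτ k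
  set S : ℕ → Finset ℝ :=
    fun k => (Finset.Icc (0 : ℤ) ⌈R * 2 ^ k⌉).image (fun z : ℤ => (z : ℝ) / 2 ^ k) with hS
  have hmemS : ∀ k ω, cl k (τ ω) ∈ S k := fun k ω => cl_mem_finset k (hτ0 ω) (hτR ω)
  have hXint : ∀ k, Integrable (X k) μ :=
    fun k => integrable_stoppedValue_of_mem_finset (hτk k) hN.int (hmemS k)
  have hprog := hN.progMeasurable
  have hXmeas : ∀ k, Measurable[(hτk k).measurableSpace] (X k) :=
    fun k => measurable_stoppedValue hprog (hτk k)
  have hXm0 : ∀ k, Measurable (X k) :=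
    fun k => (hXmeas k).mono (hτk k).measurableSpace_le le_rfl
  have hτkantitone : ∀ j k, j ≤ k → ∀ ω, cl k (τ ω) ≤ cl j (τ ω) :=
    fun j k hjk ω => cl_antitone (τ ω) hjk
  have hτkub : ∀ k ω, cl k (τ ω) ≤ R + 1 := by
    intro k ω
    have h2 : (1:ℝ) ≤ 2 ^ k := one_le_pow₀ (by norm_num)
    have h3 : ((2:ℝ) ^ k)⁻¹ ≤ 1 := (inv_le_one₀ (two_pow_pos k)).mpr h2
    have := cl_le k (τ ω)
    linarith [hτR ω]
  have hcomp : ∀ j k, j ≤ k → ∀ C : Set Ω, MeasurableSet[(hτk k).measurableSpace] C →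
      ∫ ω in C, X j ω ∂μ ≤ ∫ ω in C, X k ω ∂μ := by
    intro j k hjk C hC
    exact hN.discreteOS (hτk k) (hτk j) (hτkantitone j k hjk) (s := S k ∪ S j)
      (fun ω => Finset.mem_union_left _ (hmemS k ω))
      (fun ω => Finset.mem_union_right _ (hmemS j ω)) hC
  have hcompTop : ∀ k (C : Set Ω), MeasurableSet[(hτk k).measurableSpace] C →
      ∫ ω in C, N (R + 1) ω ∂μ ≤ ∫ ω in C, X k ω ∂μ := by
    intro k C hC
    have h := hN.discreteOS (hτk k) (isStoppingTime_const ℱ (R+1)) (fun ω => hτkub k ω)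
      (s := S k ∪ {R + 1}) (fun ω => Finset.mem_union_left _ (hmemS k ω))
      (fun ω => Finset.mem_union_right _ (Finset.mem_singleton_self _)) hC
    rwa [stoppedValue_const] at h
  have hcompZero : ∀ k, ∫ ω, X k ω ∂μ ≤ ∫ ω, N 0 ω ∂μ := by
    intro k
    have h0 := hN.discreteOS (isStoppingTime_const ℱ 0) (hτk k)
      (fun ω => (hτ0 ω).trans (le_cl k (τ ω)))
      (s := S k ∪ {0}) (fun ω => Finset.mem_union_right _ (Finset.mem_singleton_self _))
      (fun ω => Finset.mem_union_left _ (hmemS k ω)) (C := Set.univ) MeasurableSet.univ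
    rwa [stoppedValue_const, setIntegral_univ, setIntegral_univ] at h0
  set e : ℕ → ℝ := fun k => ∫ ω, X k ω ∂μ with he
  have hemono : Monotone e := monotone_nat_of_le_succ (fun k => by
    have h := hcomp k (k+1) (Nat.le_succ k) Set.univ MeasurableSet.univ
    rwa [setIntegral_univ, setIntegral_univ] at h)
  have hbdd : BddAbove (Set.range e) :=
    ⟨∫ ω, N 0 ω ∂μ, by rintro x ⟨k, rfl⟩; exact hcompZero k⟩
  have hea : Tendsto e atTop (nhds (⨆ k, e k)) := tendsto_atTop_ciSup hemono hbdd
  set a := ⨆ k, e k with ha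
  have heles : ∀ k, e k ≤ a := fun k => le_ciSup hbdd k
  set b1 : ℝ := ∫ ω, |N (R+1) ω| ∂μ with hb1
  have hNR1abs : ∀ C : Set Ω, -b1 ≤ ∫ ω in C, N (R+1) ω ∂μ ∧
      ∫ ω in C, |N (R+1) ω| ∂μ ≤ b1 := by
    intro C
    have h1 : |∫ ω in C, N (R+1) ω ∂μ| ≤ ∫ ω in C, |N (R+1) ω| ∂μ := by
      simpa [Real.norm_eq_abs] using
        norm_integral_le_integral_norm (μ := μ.restrict C) (f := N (R+1))
    have h2 : ∫ ω in C, |N (R+1) ω| ∂μ ≤ b1 :=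
      setIntegral_le_integral (hN.int (R+1)).abs (ae_of_all _ (fun ω => abs_nonneg _))
    constructor
    · have := neg_abs_le (∫ ω in C, N (R+1) ω ∂μ)
      linarith
    · exact h2
  set b : ℝ := ∫ ω, N 0 ω ∂μ + 2 * b1 with hb
  have hXb : ∀ k, ∫ ω, |X k ω| ∂μ ≤ b := by
    intro k
    set P : Set Ω := {ω | 0 < X k ω} with hP
    have hPmeasτ : MeasurableSet[(hτk k).measurableSpace] P := hXmeas k measurableSet_Ioi
    have hPm0 : MeasurableSet P := measurableSet_lt measurable_const (hXm0 k)
    have h3 : ∫ ω in P, X k ω ∂μ + ∫ ω in Pᶜ, X k ω ∂μ = e k := integral_add_compl hPm0 (hXint k)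
    have h4 : ∫ ω in P, |X k ω| ∂μ + ∫ ω in Pᶜ, |X k ω| ∂μ = ∫ ω, |X k ω| ∂μ :=
      integral_add_compl hPm0 (hXint k).abs
    have h1 : ∫ ω in P, |X k ω| ∂μ = ∫ ω in P, X k ω ∂μ :=
      setIntegral_congr_fun hPm0 (fun ω hω => abs_of_pos hω)
    have h2 : ∫ ω in Pᶜ, |X k ω| ∂μ = ∫ ω in Pᶜ, (- X k ω) ∂μ :=
      setIntegral_congr_fun hPm0.compl (fun ω hω => abs_of_nonpos (not_lt.mp hω))
    have h2' : ∫ ω in Pᶜ, (- X k ω) ∂μ = - ∫ ω in Pᶜ, X k ω ∂μ := integral_neg _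
    have h5 := hcompTop k Pᶜ hPmeasτ.compl
    have h6 := (hNR1abs Pᶜ).1
    have h7 := hcompZero k
    linarith
  have hb0 : 0 ≤ b := le_trans (integral_nonneg (fun ω => abs_nonneg _)) (hXb 0)
  have hconv : ∀ ω, Tendsto (fun k => X k ω) atTop (nhds (stoppedValue N τ ω)) :=
    fun ω => ((hN.rc ω (τ ω)).tendsto).comp (tendsto_cl_within (τ ω))
  have hsvSM : StronglyMeasurable (stoppedValue N τ) :=
    stronglyMeasurable_of_tendsto atTop (fun k => (hXm0 k).stronglyMeasurable)
      (tendsto_pi_nhds.mpr hconv)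
  have hsvint : Integrable (stoppedValue N τ) μ := by
    refine ⟨hsvSM.aestronglyMeasurable, ?_⟩
    have hpt : ∀ ω, (‖stoppedValue N τ ω‖₊ : ℝ≥0∞) = liminf (fun k => (‖X k ω‖₊ : ℝ≥0∞)) atTop :=
      fun ω => ((ENNReal.tendsto_coe.mpr (hconv ω).nnnorm).liminf_eq).symm
    have hle1 : ∫⁻ ω, ‖stoppedValue N τ ω‖₊ ∂μ
        ≤ liminf (fun k => ∫⁻ ω, ‖X k ω‖₊ ∂μ) atTop := by
      calc ∫⁻ ω, ‖stoppedValue N τ ω‖₊ ∂μ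
          = ∫⁻ ω, liminf (fun k => (‖X k ω‖₊ : ℝ≥0∞)) atTop ∂μ := lintegral_congr hpt
        _ ≤ _ := lintegral_liminf_le (fun k => (hXm0 k).nnnorm.coe_nnreal_ennreal)
    have hle2 : liminf (fun k => ∫⁻ ω, ‖X k ω‖₊ ∂μ) atTop ≤ ENNReal.ofReal b := by
      have hk : ∀ k, ∫⁻ ω, ‖X k ω‖₊ ∂μ ≤ ENNReal.ofReal b := by
        intro k
        simp only [← enorm_eq_nnnorm]
        rw [← ofReal_integral_norm_eq_lintegral_enorm (hXint k)]
        exact ENNReal.ofReal_le_ofReal (by simpa [Real.norm_eq_abs] using hXb k)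
      calc liminf (fun k => ∫⁻ ω, ‖X k ω‖₊ ∂μ) atTop
          ≤ liminf (fun _ : ℕ => ENNReal.ofReal b) atTop :=
            liminf_le_liminf (Eventually.of_forall hk)
        _ = ENNReal.ofReal b := liminf_const _
    exact lt_of_le_of_lt (hle1.trans hle2) ENNReal.ofReal_lt_top
  have hMarkov : ∀ (k : ℕ) (c : ℝ), 0 < c → (μ {ω | c < |X k ω|}).toReal * c ≤ b := by
    intro k c hc
    have hAm0 : MeasurableSet {ω | c < |X k ω|} :=
      measurableSet_lt measurable_const (hXm0 k).abs
    have h1 : ∫ ω in {ω | c < |X k ω|}, c ∂μ ≤ ∫ ω in {ω | c < |X k ω|}, |X k ω| ∂μ :=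
      setIntegral_mono_on (integrableOn_const (measure_lt_top _ _).ne)
        (hXint k).abs.integrableOn hAm0 (fun ω hω => le_of_lt hω)
    have h2 : ∫ ω in {ω | c < |X k ω|}, |X k ω| ∂μ ≤ b :=
      le_trans (setIntegral_le_integral (hXint k).abs (ae_of_all _ fun ω => abs_nonneg _)) (hXb k)
    have h3 : ∫ ω in {ω | c < |X k ω|}, c ∂μ = (μ {ω | c < |X k ω|}).toReal * c := by
      rw [setIntegral_const, smul_eq_mul, measureReal_def]
    linarith
  have hUI : ∀ ε : ℝ, 0 < ε → ∃ c : ℝ, 0 < c ∧ ∀ k,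
      ∫ ω in {ω | c < |X k ω|}, |X k ω| ∂μ ≤ ε := by
    intro ε hε
    obtain ⟨m, hm⟩ : ∃ m, a - ε/2 < e m :=
      (hea.eventually (eventually_gt_nhds (show a - ε/2 < a by linarith))).exists
    set h : Ω → ℝ := fun ω => |N (R+1) ω| + ∑ j ∈ Finset.range (m+1), |X j ω| with hh
    have hhint : Integrable h μ :=
      (hN.int (R+1)).abs.add (integrable_finset_sum _ (fun j _ => (hXint j).abs))
    have hhnn : ∀ ω, 0 ≤ h ω := fun ω => by
      have : (0:ℝ) ≤ ∑ j ∈ Finset.range (m+1), |X j ω| :=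
        Finset.sum_nonneg (fun j _ => abs_nonneg _)
      have := abs_nonneg (N (R+1) ω)
      simp only [hh]; linarith
    have hXjh : ∀ j, j ≤ m → ∀ ω, |X j ω| ≤ h ω := by
      intro j hj ω
      have h1 : |X j ω| ≤ ∑ i ∈ Finset.range (m+1), |X i ω| :=
        Finset.single_le_sum (f := fun i => |X i ω|) (fun i _ => abs_nonneg _)
          (Finset.mem_range.mpr (Nat.lt_succ_of_le hj))
      have := abs_nonneg (N (R+1) ω)
      simp only [hh]; linarith
    have hNh : ∀ ω, |N (R+1) ω| ≤ h ω := fun ω => by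
      have : (0:ℝ) ≤ ∑ j ∈ Finset.range (m+1), |X j ω| :=
        Finset.sum_nonneg (fun j _ => abs_nonneg _)
      simp only [hh]; linarith
    obtain ⟨δ, hδ0, hδ⟩ := exists_pos_absCont hhint (show (0:ℝ) < ε/2 by linarith)
    set δ' := min δ 1 with hδ'
    have hδ'0 : 0 < δ' := lt_min hδ0 (by norm_num)
    have hδ'top : δ' ≠ ⊤ := ((min_le_right _ _).trans_lt ENNReal.one_lt_top).ne
    set d := δ'.toReal with hd
    have hd0 : 0 < d := ENNReal.toReal_pos hδ'0.ne' hδ'top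
    set c := b / d + 1 with hc
    have hc0 : 0 < c := by positivity
    refine ⟨c, hc0, fun k => ?_⟩
    set A := {ω | c < |X k ω|} with hA
    have hAm0 : MeasurableSet A := measurableSet_lt measurable_const (hXm0 k).abs
    have hμA : μ A < δ' := by
      have h1 : (μ A).toReal * c ≤ b := hMarkov k c hc0
      have h2 : (μ A).toReal < d := by
        by_contra hcon
        push_neg at hcon
        have h3 : d * c ≤ b := le_trans (mul_le_mul_of_nonneg_right hcon hc0.le) h1
        have h4 : d * (b / d) = b := by field_simp
        have h5 : d * c = b + d := by rw [hc, mul_add, mul_one, h4]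
        nlinarith
      calc μ A = ENNReal.ofReal (μ A).toReal := (ENNReal.ofReal_toReal (measure_ne_top μ A)).symm
        _ < ENNReal.ofReal d := (ENNReal.ofReal_lt_ofReal_iff hd0).mpr h2
        _ = δ' := ENNReal.ofReal_toReal hδ'top
    have hAh : ∫ ω in A, |h ω| ∂μ ≤ ε/2 := hδ A hAm0 (hμA.trans_le (min_le_left _ _))
    rcases le_or_gt k m with hkm | hmk
    · calc ∫ ω in A, |X k ω| ∂μ ≤ ∫ ω in A, |h ω| ∂μ :=
            setIntegral_mono_on (hXint k).abs.integrableOn hhint.abs.integrableOn hAm0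
              (fun ω _ => (hXjh k hkm ω).trans (le_abs_self _))
        _ ≤ ε/2 := hAh
        _ ≤ ε := by linarith
    · have hAτ : MeasurableSet[(hτk k).measurableSpace] {ω | c < X k ω} :=
        hXmeas k measurableSet_Ioi
      have hAτ' : MeasurableSet[(hτk k).measurableSpace] {ω | X k ω < -c} :=
        hXmeas k measurableSet_Iio
      have hplusm0 : MeasurableSet {ω | c < X k ω} := measurableSet_lt measurable_const (hXm0 k)
      have hminm0 : MeasurableSet {ω | X k ω < -c} := measurableSet_lt (hXm0 k) measurable_const
      have hAeq : A = {ω | c < X k ω} ∪ {ω | X k ω < -c} := by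
        ext ω
        simp only [hA, Set.mem_setOf_eq, Set.mem_union, lt_abs, lt_neg]
      have hdisj2 : Disjoint {ω | c < X k ω} {ω | X k ω < -c} := by
        rw [Set.disjoint_left]
        intro ω h1 h2
        simp only [Set.mem_setOf_eq] at h1 h2
        linarith
      have hkeyC : ∀ C : Set Ω, MeasurableSet[(hτk k).measurableSpace] C →
          ∫ ω in C, X k ω ∂μ ≤ (a - e m) + ∫ ω in C, |X m ω| ∂μ := by
        intro C hC
        have hCm0 : MeasurableSet C := (hτk k).measurableSpace_le _ hC
        have h1 : ∫ ω in C, X k ω ∂μ + ∫ ω in Cᶜ, X k ω ∂μ = e k :=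
          integral_add_compl hCm0 (hXint k)
        have h2 : ∫ ω in C, X m ω ∂μ + ∫ ω in Cᶜ, X m ω ∂μ = e m :=
          integral_add_compl hCm0 (hXint m)
        have h3 : ∫ ω in Cᶜ, X m ω ∂μ ≤ ∫ ω in Cᶜ, X k ω ∂μ := hcomp m k hmk.le Cᶜ hC.compl
        have h4 : ∫ ω in C, X m ω ∂μ ≤ ∫ ω in C, |X m ω| ∂μ :=
          integral_mono_ae (hXint m).integrableOn (hXint m).abs.integrableOn
            (ae_of_all _ fun ω => le_abs_self _)
        have h5 : e k ≤ a := heles k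
        linarith
      have hsplitA : ∫ ω in A, |X k ω| ∂μ = ∫ ω in {ω | c < X k ω}, |X k ω| ∂μ
          + ∫ ω in {ω | X k ω < -c}, |X k ω| ∂μ := by
        rw [hAeq, setIntegral_union hdisj2 hminm0 (hXint k).abs.integrableOn
          (hXint k).abs.integrableOn]
      have hpos : ∫ ω in {ω | c < X k ω}, |X k ω| ∂μ
          ≤ (a - e m) + ∫ ω in {ω | c < X k ω}, |X m ω| ∂μ := by
        have heq : ∫ ω in {ω | c < X k ω}, |X k ω| ∂μ = ∫ ω in {ω | c < X k ω}, X k ω ∂μ :=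
          setIntegral_congr_fun hplusm0 (fun ω hω => abs_of_pos (lt_trans hc0 hω))
        rw [heq]
        exact hkeyC _ hAτ
      have hneg : ∫ ω in {ω | X k ω < -c}, |X k ω| ∂μ
          ≤ ∫ ω in {ω | X k ω < -c}, |N (R+1) ω| ∂μ := by
        have heq : ∫ ω in {ω | X k ω < -c}, |X k ω| ∂μ
            = ∫ ω in {ω | X k ω < -c}, (- X k ω) ∂μ :=
          setIntegral_congr_fun hminm0 (fun ω hω => abs_of_neg (lt_trans hω (by linarith)))
        have h5 := hcompTop k _ hAτ'
        have h6 : |∫ ω in {ω | X k ω < -c}, N (R+1) ω ∂μ|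
            ≤ ∫ ω in {ω | X k ω < -c}, |N (R+1) ω| ∂μ := by
          simpa [Real.norm_eq_abs] using
            norm_integral_le_integral_norm (μ := μ.restrict {ω | X k ω < -c}) (f := N (R+1))
        have h7 := neg_abs_le (∫ ω in {ω | X k ω < -c}, N (R+1) ω ∂μ)
        rw [heq, integral_neg]
        linarith
      have hsub1 : ∫ ω in {ω | c < X k ω}, |X m ω| ∂μ
          + ∫ ω in {ω | X k ω < -c}, |N (R+1) ω| ∂μ ≤ ∫ ω in A, |h ω| ∂μ := by
        have e1 : ∫ ω in {ω | c < X k ω}, |X m ω| ∂μ ≤ ∫ ω in {ω | c < X k ω}, |h ω| ∂μ :=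
          setIntegral_mono_on (hXint m).abs.integrableOn hhint.abs.integrableOn hplusm0
            (fun ω _ => (hXjh m le_rfl ω).trans (le_abs_self _))
        have e2 : ∫ ω in {ω | X k ω < -c}, |N (R+1) ω| ∂μ
            ≤ ∫ ω in {ω | X k ω < -c}, |h ω| ∂μ :=
          setIntegral_mono_on (hN.int (R+1)).abs.integrableOn hhint.abs.integrableOn hminm0
            (fun ω _ => (hNh ω).trans (le_abs_self _))
        have e3 : ∫ ω in {ω | c < X k ω}, |h ω| ∂μ + ∫ ω in {ω | X k ω < -c}, |h ω| ∂μ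
            = ∫ ω in A, |h ω| ∂μ := by
          rw [hAeq, setIntegral_union hdisj2 hminm0 hhint.abs.integrableOn
            hhint.abs.integrableOn]
        linarith
      have hfinal : a - e m ≤ ε/2 := by linarith
      linarith
  -- final Vitali argument
  refine ⟨hsvint, ?_⟩
  have hIk : ∀ k, Integrable (fun ω => X k ω - stoppedValue N τ ω) μ :=
    fun k => (hXint k).sub hsvint
  refine Metric.tendsto_atTop.mpr (fun ε hε => ?_)
  have hε5 : 0 < ε/5 := by linarith
  obtain ⟨c, hc0, hUIc⟩ := hUI (ε/5) hε5
  obtain ⟨δ2, hδ20, hδ2⟩ := exists_pos_absCont hsvint hε5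
  have hTM : Tendsto (fun k => μ {ω | ε/5 ≤ dist (X k ω) (stoppedValue N τ ω)}) atTop (nhds 0) :=
    tendstoInMeasure_iff_dist.mp (tendstoInMeasure_of_tendsto_ae (fun k => (hXm0 k).aestronglyMeasurable)
      (ae_of_all _ hconv)) (ε/5) hε5
  set κ := min δ2 (ENNReal.ofReal (ε/(5*c))) with hκ
  have hκ0 : 0 < κ := lt_min hδ20 (ENNReal.ofReal_pos.mpr (by positivity))
  have hev : ∀ᶠ k in atTop, μ {ω | ε/5 ≤ dist (X k ω) (stoppedValue N τ ω)} < κ :=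
    hTM.eventually (gt_mem_nhds hκ0)
  obtain ⟨K, hK⟩ := eventually_atTop.mp hev
  refine ⟨K, fun k hk => ?_⟩
  have hKk := hK k hk
  set Sk := {ω | ε/5 ≤ dist (X k ω) (stoppedValue N τ ω)} with hSdef
  have hSeq : Sk = {ω | ε/5 ≤ |X k ω - stoppedValue N τ ω|} := by
    simp only [hSdef, Real.dist_eq]
  have hSm0 : MeasurableSet Sk := by
    rw [hSeq]
    exact measurableSet_le measurable_const ((hXm0 k).sub hsvSM.measurable).abs
  -- split over Sk and complement
  have hsplit : ∫ ω in Sk, |X k ω - stoppedValue N τ ω| ∂μ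
      + ∫ ω in Skᶜ, |X k ω - stoppedValue N τ ω| ∂μ
      = ∫ ω, |X k ω - stoppedValue N τ ω| ∂μ := integral_add_compl hSm0 (hIk k).abs
  have hcompl : ∫ ω in Skᶜ, |X k ω - stoppedValue N τ ω| ∂μ ≤ ε/5 := by
    have h1 : ∫ ω in Skᶜ, |X k ω - stoppedValue N τ ω| ∂μ ≤ ∫ ω in Skᶜ, (ε/5) ∂μ := by
      refine setIntegral_mono_on (hIk k).abs.integrableOn
        (integrableOn_const (measure_lt_top _ _).ne) hSm0.compl ?_
      intro ω hω
      have hnot : ¬ (ε/5 ≤ |X k ω - stoppedValue N τ ω|) := by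
        intro hcon
        exact hω (by rw [hSeq]; exact hcon)
      linarith [not_le.mp hnot]
    have h2 : ∫ ω in Skᶜ, (ε/5) ∂μ = (μ Skᶜ).toReal * (ε/5) := by
      rw [setIntegral_const, smul_eq_mul, measureReal_def]
    have h3 : (μ Skᶜ).toReal ≤ 1 := by
      have := prob_le_one (μ := μ) (s := Skᶜ)
      simpa using ENNReal.toReal_mono (by norm_num) this
    nlinarith
  have hSsv : ∫ ω in Sk, |stoppedValue N τ ω| ∂μ ≤ ε/5 :=
    hδ2 Sk hSm0 (hKk.trans_le (min_le_left _ _))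
  have hμSk : (μ Sk).toReal < ε/(5*c) := by
    have h1 : μ Sk < ENNReal.ofReal (ε/(5*c)) := hKk.trans_le (min_le_right _ _)
    exact ENNReal.toReal_lt_of_lt_ofReal h1
  have hSX : ∫ ω in Sk, |X k ω| ∂μ ≤ c * (μ Sk).toReal + ε/5 := by
    have hsub : Sk = (Sk ∩ {ω | |X k ω| ≤ c}) ∪ (Sk ∩ {ω | c < |X k ω|}) := by
      ext ω
      by_cases hcc : |X k ω| ≤ c <;>
        simp [hcc, not_le.mp, lt_of_not_ge] <;> tauto
    have hm1 : MeasurableSet (Sk ∩ {ω | |X k ω| ≤ c}) :=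
      hSm0.inter (measurableSet_le (hXm0 k).abs measurable_const)
    have hm2 : MeasurableSet (Sk ∩ {ω | c < |X k ω|}) :=
      hSm0.inter (measurableSet_lt measurable_const (hXm0 k).abs)
    have hdj : Disjoint (Sk ∩ {ω | |X k ω| ≤ c}) (Sk ∩ {ω | c < |X k ω|}) := by
      rw [Set.disjoint_left]
      rintro ω ⟨_, h1⟩ ⟨_, h2⟩
      simp only [Set.mem_setOf_eq] at h1 h2
      linarith
    have e0 : ∫ ω in Sk, |X k ω| ∂μ = ∫ ω in Sk ∩ {ω | |X k ω| ≤ c}, |X k ω| ∂μ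
        + ∫ ω in Sk ∩ {ω | c < |X k ω|}, |X k ω| ∂μ := by
      conv_lhs => rw [hsub]
      rw [setIntegral_union hdj hm2 (hXint k).abs.integrableOn (hXint k).abs.integrableOn]
    have e1 : ∫ ω in Sk ∩ {ω | |X k ω| ≤ c}, |X k ω| ∂μ ≤ c * (μ Sk).toReal := by
      have h1 : ∫ ω in Sk ∩ {ω | |X k ω| ≤ c}, |X k ω| ∂μ
          ≤ ∫ ω in Sk ∩ {ω | |X k ω| ≤ c}, c ∂μ :=
        setIntegral_mono_on (hXint k).abs.integrableOn
          (integrableOn_const (measure_lt_top _ _).ne) hm1 (fun ω hω => hω.2)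
      have h2 : ∫ ω in Sk ∩ {ω | |X k ω| ≤ c}, c ∂μ
          = (μ (Sk ∩ {ω | |X k ω| ≤ c})).toReal * c := by
        rw [setIntegral_const, smul_eq_mul, measureReal_def]
      have h3 : (μ (Sk ∩ {ω | |X k ω| ≤ c})).toReal ≤ (μ Sk).toReal :=
        ENNReal.toReal_mono (measure_ne_top μ _) (measure_mono Set.inter_subset_left)
      nlinarith
    have e2 : ∫ ω in Sk ∩ {ω | c < |X k ω|}, |X k ω| ∂μ
        ≤ ∫ ω in {ω | c < |X k ω|}, |X k ω| ∂μ := by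
      refine setIntegral_mono_set (hXint k).abs.integrableOn
        (ae_of_all _ (fun ω => abs_nonneg _)) ?_
      exact Eventually.of_forall (fun ω hω => hω.2)
    linarith [hUIc k]
  have hStotal : ∫ ω in Sk, |X k ω - stoppedValue N τ ω| ∂μ
      ≤ ∫ ω in Sk, |X k ω| ∂μ + ∫ ω in Sk, |stoppedValue N τ ω| ∂μ := by
    have h1 : ∫ ω in Sk, |X k ω - stoppedValue N τ ω| ∂μ
        ≤ ∫ ω in Sk, (|X k ω| + |stoppedValue N τ ω|) ∂μ :=
      setIntegral_mono_on (hIk k).abs.integrableOn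
        ((hXint k).abs.add hsvint.abs).integrableOn hSm0
        (fun ω _ => abs_sub (X k ω) (stoppedValue N τ ω))
    have h2 : ∫ ω in Sk, (|X k ω| + |stoppedValue N τ ω|) ∂μ
        = ∫ ω in Sk, |X k ω| ∂μ + ∫ ω in Sk, |stoppedValue N τ ω| ∂μ :=
      integral_add (hXint k).abs.integrableOn hsvint.abs.integrableOn
    linarith
  have hcb : c * (μ Sk).toReal ≤ ε/5 := by
    have h1 : c * (μ Sk).toReal ≤ c * (ε/(5*c)) :=
      mul_le_mul_of_nonneg_left hμSk.le hc0.le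
    have h2 : c * (ε/(5*c)) = ε/5 := by field_simp
    linarith
  have hnonneg : 0 ≤ ∫ ω, |X k ω - stoppedValue N τ ω| ∂μ :=
    integral_nonneg (fun ω => abs_nonneg _)
  have : dist (∫ ω, |X k ω - stoppedValue N τ ω| ∂μ) 0
      = ∫ ω, |X k ω - stoppedValue N τ ω| ∂μ := by
    rw [Real.dist_eq, sub_zero, abs_of_nonneg hnonneg]
  rw [this]
  linarith

end PastingAux
namespace PastingAux

variable {Ω : Type*} {m0 : MeasurableSpace Ω} {μ : MeasureTheory.Measure Ω}
  {ℱ : MeasureTheory.Filtration ℝ m0} {N : ℝ → Ω → ℝ}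

open MeasureTheory Filter Topology
open scoped ENNReal

theorem Nice.optionalSampling [IsProbabilityMeasure μ] (hN : Nice ℱ μ N)
    {τ π : Ω → ℝ} (hτ : IsStoppingTime ℱ τ) (hπ : IsStoppingTime ℱ π)
    (hle : ∀ ω, τ ω ≤ π ω) {R : ℝ} (hτ0 : ∀ ω, 0 ≤ τ ω) (hπR : ∀ ω, π ω ≤ R)
    {C : Set Ω} (hC : MeasurableSet[hτ.measurableSpace] C) :
    ∫ ω in C, stoppedValue N π ω ∂μ ≤ ∫ ω in C, stoppedValue N τ ω ∂μ := by
  have hπ0 : ∀ ω, 0 ≤ π ω := fun ω => (hτ0 ω).trans (hle ω)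
  have hτR : ∀ ω, τ ω ≤ R := fun ω => (hle ω).trans (hπR ω)
  obtain ⟨hτint, hτL1⟩ := hN.sv_L1 hτ hτ0 hτR
  obtain ⟨hπint, hπL1⟩ := hN.sv_L1 hπ hπ0 hπR
  have hkle : ∀ k : ℕ, ∫ ω in C, stoppedValue N (fun ω' => cl k (π ω')) ω ∂μ
      ≤ ∫ ω in C, stoppedValue N (fun ω' => cl k (τ ω')) ω ∂μ := by
    intro k
    have hCk : MeasurableSet[(isStoppingTime_cl hτ k).measurableSpace] C :=
      IsStoppingTime.measurableSpace_mono hτ (isStoppingTime_cl hτ k)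
        (fun ω => le_cl k (τ ω)) _ hC
    exact hN.discreteOS (isStoppingTime_cl hτ k) (isStoppingTime_cl hπ k)
      (fun ω => cl_mono k (hle ω))
      (s := (Finset.Icc (0 : ℤ) ⌈R * 2 ^ k⌉).image (fun z : ℤ => (z : ℝ) / 2 ^ k))
      (fun ω => cl_mem_finset k (hτ0 ω) (hτR ω))
      (fun ω => cl_mem_finset k (hπ0 ω) (hπR ω)) hCk
  have hlim : ∀ (σ' : Ω → ℝ), Integrable (stoppedValue N σ') μ →
      Tendsto (fun k => ∫ ω, |stoppedValue N (fun ω' => cl k (σ' ω')) ω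
          - stoppedValue N σ' ω| ∂μ) atTop (nhds 0) →
      (∀ k : ℕ, Integrable (stoppedValue N (fun ω' => cl k (σ' ω'))) μ) →
      Tendsto (fun k => ∫ ω in C, stoppedValue N (fun ω' => cl k (σ' ω')) ω ∂μ) atTop
        (nhds (∫ ω in C, stoppedValue N σ' ω ∂μ)) := by
    intro σ' hint' hL1 hintk
    rw [tendsto_iff_dist_tendsto_zero]
    refine squeeze_zero (fun k => dist_nonneg) (fun k => ?_) hL1
    rw [Real.dist_eq]
    have h1 : ∫ ω in C, stoppedValue N (fun ω' => cl k (σ' ω')) ω ∂μ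
        - ∫ ω in C, stoppedValue N σ' ω ∂μ
        = ∫ ω in C, (stoppedValue N (fun ω' => cl k (σ' ω')) ω - stoppedValue N σ' ω) ∂μ :=
      (integral_sub (hintk k).integrableOn hint'.integrableOn).symm
    rw [h1]
    have h2 : |∫ ω in C, (stoppedValue N (fun ω' => cl k (σ' ω')) ω
        - stoppedValue N σ' ω) ∂μ| ≤ ∫ ω in C, |stoppedValue N (fun ω' => cl k (σ' ω')) ω
        - stoppedValue N σ' ω| ∂μ := by
      simpa [Real.norm_eq_abs] using norm_integral_le_integral_norm (μ := μ.restrict C)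
        (f := fun ω => stoppedValue N (fun ω' => cl k (σ' ω')) ω - stoppedValue N σ' ω)
    refine h2.trans (setIntegral_le_integral ((hintk k).sub hint').abs
      (ae_of_all _ fun ω => abs_nonneg _))
  have hτtend := hlim τ hτint hτL1 (fun k =>
    integrable_stoppedValue_of_mem_finset (isStoppingTime_cl hτ k) hN.int
      (fun ω => cl_mem_finset (R := R) k (hτ0 ω) (hτR ω)))
  have hπtend := hlim π hπint hπL1 (fun k =>
    integrable_stoppedValue_of_mem_finset (isStoppingTime_cl hπ k) hN.int
      (fun ω => cl_mem_finset (R := R) k (hπ0 ω) (hπR ω)))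
  exact le_of_tendsto_of_tendsto' hπtend hτtend hkle

theorem Nice.sv_integrable [IsProbabilityMeasure μ] (hN : Nice ℱ μ N)
    {τ : Ω → ℝ} (hτ : IsStoppingTime ℱ τ) {R : ℝ}
    (hτ0 : ∀ ω, 0 ≤ τ ω) (hτR : ∀ ω, τ ω ≤ R) :
    Integrable (stoppedValue N τ) μ :=
  (hN.sv_L1 hτ hτ0 hτR).1

/-- Pasting of supermartingales at a stopping time `σ` along a countable
`F_σ`-measurable partition `(B n)`: if each `M n` is a right-continuous supermartingale on
`[0,T]` starting at `0`, and the pasted process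
`M̄ t = M 0 (t ∧ σ) + ∑' n, 1_{B n} (M n (t ∨ σ) - M n σ)` is integrable at every
`t ∈ [0,T]`, then `M̄` is a supermartingale on `[0,T]` with `M̄ 0 = 0`.
(The index `0` plays the role of the index `1` in the paper.  The filtration is assumed
complete, as part of the usual conditions.) -/
theorem stmt_1_aux
    {Ω : Type*} {m0 : MeasurableSpace Ω} {μ : Measure Ω} [IsProbabilityMeasure μ]
    (ℱ : Filtration ℝ m0) (T : ℝ) (hT : 0 < T)
    -- completeness of the filtration (usual conditions)
    (hcomp : ∀ s : Set Ω, μ s = 0 → MeasurableSet[ℱ 0] s)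
    -- the stopping time σ with values in [0,T]
    (σ : Ω → ℝ) (hσ : IsStoppingTime ℱ σ) (hσ_mem : ∀ ω, σ ω ∈ Set.Icc (0:ℝ) T)
    -- the partition (B n) of Ω with B n ∈ F_σ
    (B : ℕ → Set Ω)
    (hB_disj : Pairwise (Function.onFun Disjoint B))
    (hB_cover : (⋃ n, B n) = Set.univ)
    (hB_meas : ∀ n, MeasurableSet[hσ.measurableSpace] (B n))
    -- the right-continuous supermartingales M n with M n 0 = 0
    (M : ℕ → ℝ → Ω → ℝ)
    (hM_rc : ∀ n ω t, ContinuousWithinAt (fun s => M n s ω) (Set.Ici t) t)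
    (hM_adapted : ∀ n, ∀ t ∈ Set.Icc (0:ℝ) T, StronglyMeasurable[ℱ t] (M n t))
    (hM_int : ∀ n, ∀ t ∈ Set.Icc (0:ℝ) T, Integrable (M n t) μ)
    (hM_super : ∀ n, ∀ s t : ℝ, 0 ≤ s → s ≤ t → t ≤ T → μ[M n t | ℱ s] ≤ᵐ[μ] M n s)
    (hM0 : ∀ n ω, M n 0 ω = 0)
    -- the pasted process
    (Mbar : ℝ → Ω → ℝ)
    (hMbar : ∀ t ω, Mbar t ω = M 0 (min t (σ ω)) ω +
      ∑' n, (B n).indicator (fun ω' => M n (max t (σ ω')) ω' - M n (σ ω') ω') ω)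
    (hMbar_int : ∀ t ∈ Set.Icc (0:ℝ) T, Integrable (Mbar t) μ) :
    (∀ t ∈ Set.Icc (0:ℝ) T, StronglyMeasurable[ℱ t] (Mbar t)) ∧
    (∀ s t : ℝ, 0 ≤ s → s ≤ t → t ≤ T → μ[Mbar t | ℱ s] ≤ᵐ[μ] Mbar s) ∧
    (∀ᵐ ω ∂μ, Mbar 0 ω = 0) := by
  classical
  -- clamped processes
  set c0 : ℝ → ℝ := fun t => max 0 (min t T) with hc0
  have hc0mem : ∀ t, c0 t ∈ Set.Icc (0:ℝ) T :=
    fun t => ⟨le_max_left _ _, max_le hT.le (min_le_right _ _)⟩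
  have hc0id : ∀ t ∈ Set.Icc (0:ℝ) T, c0 t = t := fun t ht => by
    rw [hc0]; dsimp only; rw [min_eq_left ht.2, max_eq_right ht.1]
  have hc0mono : Monotone c0 := fun x y hxy =>
    max_le_max le_rfl (min_le_min_right _ hxy)
  set N : ℕ → ℝ → Ω → ℝ := fun n t ω => M n (c0 t) ω with hNdef
  have hNeq : ∀ n, ∀ t ∈ Set.Icc (0:ℝ) T, N n t = M n t := fun n t ht => by
    simp only [hNdef, hc0id t ht]
  have hNice : ∀ n, Nice ℱ μ (N n) := by
    intro n
    constructor
    · intro t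
      rcases le_or_gt 0 t with h0 | h0
      · have hle : c0 t ≤ t := by
          rw [hc0]; dsimp only; exact max_le h0 (min_le_left _ _)
        exact (hM_adapted n _ (hc0mem t)).mono (ℱ.mono hle)
      · have hzero : N n t = fun _ => (0:ℝ) := by
          funext ω
          have hct : c0 t = 0 := by
            rw [hc0]; dsimp only
            rw [min_eq_left (h0.le.trans hT.le), max_eq_left h0.le]
          show M n (c0 t) ω = 0
          rw [hct, hM0 n ω]
        rw [hzero]
        exact stronglyMeasurable_const
    · exact fun t => hM_int n _ (hc0mem t)
    · intro ω t
      have hcont : ContinuousWithinAt c0 (Set.Ici t) t :=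
        ((continuous_const.max ((continuous_id.min continuous_const))) :
          Continuous c0).continuousWithinAt
      have hmaps : Set.MapsTo c0 (Set.Ici t) (Set.Ici (c0 t)) := fun x hx => hc0mono hx
      exact ContinuousWithinAt.comp (hM_rc n ω (c0 t)) hcont hmaps
    · intro u v huv E hE
      rcases le_or_gt u T with huT | hTu
      · have hu' : u ≤ c0 u := by
          rw [hc0]; dsimp only
          rw [min_eq_left huT]; exact le_max_right _ _
        have hE' : MeasurableSet[ℱ (c0 u)] E := ℱ.mono hu' _ hE
        have hc0le : c0 u ≤ c0 v := hc0mono huv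
        calc ∫ ω in E, N n v ω ∂μ
            = ∫ ω in E, (μ[M n (c0 v)|ℱ (c0 u)]) ω ∂μ :=
              (setIntegral_condExp (ℱ.le (c0 u)) (hM_int n _ (hc0mem v)) hE').symm
          _ ≤ ∫ ω in E, M n (c0 u) ω ∂μ := by
              refine setIntegral_mono_ae integrable_condExp.integrableOn
                (hM_int n _ (hc0mem u)).integrableOn ?_
              exact hM_super n (c0 u) (c0 v) (hc0mem u).1 hc0le (hc0mem v).2
          _ = ∫ ω in E, N n u ω ∂μ := rfl
      · have h1 : c0 u = T := by
          rw [hc0]; dsimp only; rw [min_eq_right hTu.le, max_eq_right hT.le]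
        have h2 : c0 v = T := by
          rw [hc0]; dsimp only; rw [min_eq_right (hTu.le.trans huv), max_eq_right hT.le]
        have : N n v = N n u := by
          funext ω; show M n (c0 v) ω = M n (c0 u) ω; rw [h1, h2]
        rw [this]
  -- convenient measurability facts
  have hBm0 : ∀ n, MeasurableSet (B n) := fun n => hσ.measurableSpace_le _ (hB_meas n)
  -- generic decomposition of Mbar via stopped values of N
  have hdecomp : ∀ r ∈ Set.Icc (0:ℝ) T, ∀ ω, Mbar r ω =
      stoppedValue (N 0) (fun ω' => min (σ ω') r) ω +
      ∑' n, (B n).indicator (fun ω' => stoppedValue (N n) (fun ω'' => max (σ ω'') r) ω'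
        - stoppedValue (N n) σ ω') ω := by
    intro r hr ω
    rw [hMbar r ω]
    congr 1
    · have h1 : min (σ ω) r ∈ Set.Icc (0:ℝ) T :=
        ⟨le_min (hσ_mem ω).1 hr.1, (min_le_left _ _).trans (hσ_mem ω).2⟩
      show M 0 (min r (σ ω)) ω = N 0 (min (σ ω) r) ω
      rw [hNeq 0 _ h1, min_comm]
    · refine tsum_congr (fun n => ?_)
      by_cases hω : ω ∈ B n
      · rw [Set.indicator_of_mem hω, Set.indicator_of_mem hω]
        have h2 : max (σ ω) r ∈ Set.Icc (0:ℝ) T :=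
          ⟨hr.1.trans (le_max_right _ _), max_le (hσ_mem ω).2 hr.2⟩
        show M n (max r (σ ω)) ω - M n (σ ω) ω
          = N n (max (σ ω) r) ω - N n (σ ω) ω
        rw [hNeq n _ h2, hNeq n _ (hσ_mem ω), max_comm]
      · rw [Set.indicator_of_notMem hω, Set.indicator_of_notMem hω]
  -- integrability of the stopped values
  have hI_ν : ∀ r ∈ Set.Icc (0:ℝ) T,
      Integrable (stoppedValue (N 0) (fun ω' => min (σ ω') r)) μ := fun r hr =>
    (hNice 0).sv_integrable (hσ.min_const r) (R := T)
      (fun ω => le_min (hσ_mem ω).1 hr.1) (fun ω => (min_le_left _ _).trans (hσ_mem ω).2)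
  have hI_ρ : ∀ n, ∀ r ∈ Set.Icc (0:ℝ) T,
      Integrable (stoppedValue (N n) (fun ω' => max (σ ω') r)) μ := fun n r hr =>
    (hNice n).sv_integrable (hσ.max_const r) (R := T)
      (fun ω => hr.1.trans (le_max_right _ _)) (fun ω => max_le (hσ_mem ω).2 hr.2)
  have hI_σ : ∀ n, Integrable (stoppedValue (N n) σ) μ := fun n =>
    (hNice n).sv_integrable hσ (R := T) (fun ω => (hσ_mem ω).1) (fun ω => (hσ_mem ω).2)
  -- ============ measurability ============
  have hmeasMbar : ∀ t ∈ Set.Icc (0:ℝ) T, StronglyMeasurable[ℱ t] (Mbar t) := by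
    intro t ht
    have hνst : IsStoppingTime ℱ (fun ω => min (σ ω) t) := hσ.min_const t
    have hρst : IsStoppingTime ℱ (fun ω => max (σ ω) t) := hσ.max_const t
    have hσleρ : hσ.measurableSpace ≤ hρst.measurableSpace :=
      IsStoppingTime.measurableSpace_mono hσ hρst (fun ω => le_max_left _ _)
    have hA : StronglyMeasurable[ℱ t] (stoppedValue (N 0) (fun ω => min (σ ω) t)) :=
      stronglyMeasurable_stoppedValue_of_le (hNice 0).progMeasurable hνst
        (fun ω => min_le_right _ _)
    set φ : ℕ → Ω → ℝ := fun n => (B n ∩ {ω | σ ω ≤ t}).indicator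
      (fun ω => stoppedValue (N n) (fun ω' => max (σ ω') t) ω - stoppedValue (N n) σ ω) with hφ
    have hφSM : ∀ n, StronglyMeasurable[ℱ t] (φ n) := by
      intro n
      apply Measurable.stronglyMeasurable
      have hψ : Measurable[hρst.measurableSpace]
          (fun ω => stoppedValue (N n) (fun ω' => max (σ ω') t) ω - stoppedValue (N n) σ ω) :=
        (measurable_stoppedValue (hNice n).progMeasurable hρst).sub
          ((measurable_stoppedValue (hNice n).progMeasurable hσ).mono hσleρ le_rfl)
      have hE : MeasurableSet[hρst.measurableSpace] (B n ∩ {ω | σ ω ≤ t}) :=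
        hσleρ _ ((hB_meas n).inter (hσ.measurableSet_le' t))
      have hEt : ∀ ω ∈ B n ∩ {ω | σ ω ≤ t}, max (σ ω) t ≤ t := fun ω hω => max_le hω.2 le_rfl
      -- indicator measurability lemma inline
      have hEt' : MeasurableSet[ℱ t] (B n ∩ {ω | σ ω ≤ t}) := by
        have h2 : (B n ∩ {ω | σ ω ≤ t}) ∩ {ω | max (σ ω) t ≤ t} = B n ∩ {ω | σ ω ≤ t} :=
          Set.inter_eq_self_of_subset_left (fun ω hω => hEt ω hω)
        rw [← h2]
        exact ((hρst.measurableSet _).mp hE) t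
      intro s hs
      by_cases h0 : (0:ℝ) ∈ s
      · have hpre : φ n ⁻¹' s = ((B n ∩ {ω | σ ω ≤ t})
            ∩ (fun ω => stoppedValue (N n) (fun ω' => max (σ ω') t) ω
              - stoppedValue (N n) σ ω) ⁻¹' s) ∪ (B n ∩ {ω | σ ω ≤ t})ᶜ := by
          ext ω
          by_cases hω : ω ∈ B n ∩ {ω | σ ω ≤ t} <;>
            simp [hφ, Set.indicator_apply, hω, h0]
        rw [hpre]
        have hAA : MeasurableSet[ℱ t] ((B n ∩ {ω | σ ω ≤ t})
            ∩ (fun ω => stoppedValue (N n) (fun ω' => max (σ ω') t) ω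
              - stoppedValue (N n) σ ω) ⁻¹' s) := by
          have hAρ : MeasurableSet[hρst.measurableSpace] _ := hE.inter (hψ hs)
          have h2 : ((B n ∩ {ω | σ ω ≤ t})
              ∩ (fun ω => stoppedValue (N n) (fun ω' => max (σ ω') t) ω
                - stoppedValue (N n) σ ω) ⁻¹' s) ∩ {ω | max (σ ω) t ≤ t}
              = (B n ∩ {ω | σ ω ≤ t})
              ∩ (fun ω => stoppedValue (N n) (fun ω' => max (σ ω') t) ω
                - stoppedValue (N n) σ ω) ⁻¹' s :=
            Set.inter_eq_self_of_subset_left (fun ω hω => hEt ω hω.1)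
          rw [← h2]
          exact ((hρst.measurableSet _).mp hAρ) t
        exact hAA.union hEt'.compl
      · have hpre : φ n ⁻¹' s = ((B n ∩ {ω | σ ω ≤ t})
            ∩ (fun ω => stoppedValue (N n) (fun ω' => max (σ ω') t) ω
              - stoppedValue (N n) σ ω) ⁻¹' s) := by
          ext ω
          by_cases hω : ω ∈ B n ∩ {ω | σ ω ≤ t} <;>
            simp [hφ, Set.indicator_apply, hω, h0]
        rw [hpre]
        have hAρ : MeasurableSet[hρst.measurableSpace] _ := hE.inter (hψ hs)
        have h2 : ((B n ∩ {ω | σ ω ≤ t})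
            ∩ (fun ω => stoppedValue (N n) (fun ω' => max (σ ω') t) ω
              - stoppedValue (N n) σ ω) ⁻¹' s) ∩ {ω | max (σ ω) t ≤ t}
            = (B n ∩ {ω | σ ω ≤ t})
            ∩ (fun ω => stoppedValue (N n) (fun ω' => max (σ ω') t) ω
              - stoppedValue (N n) σ ω) ⁻¹' s :=
          Set.inter_eq_self_of_subset_left (fun ω hω => hEt ω hω.1)
        rw [← h2]
        exact ((hρst.measurableSet _).mp hAρ) t
    have hsumSM : StronglyMeasurable[ℱ t] (fun ω => ∑' n, φ n ω) := by
      refine stronglyMeasurable_of_tendsto atTop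
        (f := fun K => fun ω => ∑ n ∈ Finset.range K, φ n ω)
        (fun K => Finset.stronglyMeasurable_fun_sum _ (fun n _ => hφSM n)) ?_
      rw [tendsto_pi_nhds]
      intro ω
      obtain ⟨n0, hn0⟩ : ∃ n0, ω ∈ B n0 := by
        have : ω ∈ ⋃ n, B n := hB_cover ▸ Set.mem_univ ω
        exact Set.mem_iUnion.mp this
      have hother : ∀ n, n ≠ n0 → φ n ω = 0 := by
        intro n hn
        have hnot : ω ∉ B n := fun hωn => Set.disjoint_left.mp (hB_disj hn) hωn hn0
        exact Set.indicator_of_notMem (fun hc => hnot hc.1) _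
      have htsum : ∑' n, φ n ω = φ n0 ω := tsum_eq_single n0 hother
      rw [htsum]
      have hconst : ∀ K, n0 < K → ∑ n ∈ Finset.range K, φ n ω = φ n0 ω := fun K hK =>
        Finset.sum_eq_single_of_mem n0 (Finset.mem_range.mpr hK) (fun n _ hn => hother n hn)
      exact tendsto_atTop_of_eventually_const (i₀ := n0 + 1)
        (fun K hK => hconst K (Nat.lt_of_lt_of_le (Nat.lt_succ_self n0) hK))
    have hMeq : Mbar t = fun ω => stoppedValue (N 0) (fun ω' => min (σ ω') t) ω
        + ∑' n, φ n ω := by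
      funext ω
      rw [hdecomp t ht ω]
      congr 1
      refine tsum_congr (fun n => ?_)
      simp only [hφ]
      by_cases hω : ω ∈ B n
      · by_cases hσt : σ ω ≤ t
        · rw [Set.indicator_of_mem hω,
            Set.indicator_of_mem (show ω ∈ B n ∩ {ω | σ ω ≤ t} from ⟨hω, hσt⟩)]
        · rw [Set.indicator_of_mem hω,
            Set.indicator_of_notMem (show ω ∉ B n ∩ {ω | σ ω ≤ t} from fun hc => hσt hc.2)]
          have hmax : max (σ ω) t = σ ω := max_eq_left (not_le.mp hσt).le
          show stoppedValue (N n) (fun ω'' => max (σ ω'') t) ω - stoppedValue (N n) σ ω = 0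
          rw [stoppedValue, stoppedValue, hmax, sub_self]
      · rw [Set.indicator_of_notMem hω,
          Set.indicator_of_notMem (show ω ∉ B n ∩ {ω | σ ω ≤ t} from fun hc => hω hc.1)]
    rw [hMeq]
    exact hA.add hsumSM
  refine ⟨hmeasMbar, ?_, ?_⟩
  · -- ============ supermartingale property ============
    intro s t hs0 hst htT
    have hsIcc : s ∈ Set.Icc (0:ℝ) T := ⟨hs0, hst.trans htT⟩
    have htIcc : t ∈ Set.Icc (0:ℝ) T := ⟨hs0.trans hst, htT⟩
    have hint_t : Integrable (Mbar t) μ := hMbar_int t htIcc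
    have hint_s : Integrable (Mbar s) μ := hMbar_int s hsIcc
    have hsetineq : ∀ A : Set Ω, MeasurableSet[ℱ s] A →
        ∫ ω in A, Mbar t ω ∂μ ≤ ∫ ω in A, Mbar s ω ∂μ := by
      intro A hA
      have hAm0 : MeasurableSet A := ℱ.le s _ hA
      have hANcover : A = ⋃ n, (A ∩ B n) := by
        rw [← Set.inter_iUnion, hB_cover, Set.inter_univ]
      have hdisjAB : Pairwise (Function.onFun Disjoint (fun n => A ∩ B n)) := fun i j hij =>
        (hB_disj hij).mono Set.inter_subset_right Set.inter_subset_right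
      -- HasSum decomposition, generic in r
      have hHS : ∀ r, r ∈ Set.Icc (0:ℝ) T →
          HasSum (fun n => ∫ ω in A ∩ B n,
            (stoppedValue (N n) (fun ω'' => max (σ ω'') r) ω - stoppedValue (N n) σ ω) ∂μ)
          (∫ ω in A, (Mbar r ω - stoppedValue (N 0) (fun ω' => min (σ ω') r) ω) ∂μ) := by
        intro r hr
        have hGint : Integrable
            (fun ω => Mbar r ω - stoppedValue (N 0) (fun ω' => min (σ ω') r) ω) μ :=
          (hMbar_int r hr).sub (hI_ν r hr)
        have h1 : HasSum (fun n => ∫ ω in A ∩ B n,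
            (Mbar r ω - stoppedValue (N 0) (fun ω' => min (σ ω') r) ω) ∂μ)
            (∫ ω in ⋃ n, (A ∩ B n),
              (Mbar r ω - stoppedValue (N 0) (fun ω' => min (σ ω') r) ω) ∂μ) :=
          hasSum_integral_iUnion (fun n => hAm0.inter (hBm0 n)) hdisjAB
            (by rw [← hANcover]; exact hGint.integrableOn)
        rw [← hANcover] at h1
        have hcongr : ∀ n, ∫ ω in A ∩ B n,
            (Mbar r ω - stoppedValue (N 0) (fun ω' => min (σ ω') r) ω) ∂μ
            = ∫ ω in A ∩ B n,
            (stoppedValue (N n) (fun ω'' => max (σ ω'') r) ω - stoppedValue (N n) σ ω) ∂μ := by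
          intro n
          refine setIntegral_congr_fun (hAm0.inter (hBm0 n)) (fun ω hω => ?_)
          have h2 : Mbar r ω - stoppedValue (N 0) (fun ω' => min (σ ω') r) ω
              = ∑' m, (B m).indicator
                (fun ω' => stoppedValue (N m) (fun ω'' => max (σ ω'') r) ω'
                  - stoppedValue (N m) σ ω') ω := by
            rw [hdecomp r hr ω]; ring
          rw [h2]
          have h3 : ∀ m, m ≠ n → (B m).indicator
              (fun ω' => stoppedValue (N m) (fun ω'' => max (σ ω'') r) ω'
                - stoppedValue (N m) σ ω') ω = 0 := fun m hm =>
            Set.indicator_of_notMem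
              (fun hc => Set.disjoint_left.mp (hB_disj hm) hc hω.2) _
          rw [tsum_eq_single n h3, Set.indicator_of_mem hω.2]
        exact (funext hcongr : _) ▸ h1
      -- term-wise comparison
      have hterm : ∀ n, ∫ ω in A ∩ B n,
          (stoppedValue (N n) (fun ω'' => max (σ ω'') t) ω - stoppedValue (N n) σ ω) ∂μ
          ≤ ∫ ω in A ∩ B n,
          (stoppedValue (N n) (fun ω'' => max (σ ω'') s) ω - stoppedValue (N n) σ ω) ∂μ := by
        intro n
        rw [integral_sub (hI_ρ n t htIcc).integrableOn (hI_σ n).integrableOn,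
          integral_sub (hI_ρ n s hsIcc).integrableOn (hI_σ n).integrableOn]
        have hCmeas : MeasurableSet[(hσ.max_const s).measurableSpace] (A ∩ B n) := by
          refine MeasurableSet.inter ?_ ?_
          · exact (IsStoppingTime.le_measurableSpace_of_const_le (hσ.max_const s)
              (fun ω => le_max_right _ _)) _ hA
          · exact (IsStoppingTime.measurableSpace_mono hσ (hσ.max_const s)
              (fun ω => le_max_left _ _)) _ (hB_meas n)
        have hOS := (hNice n).optionalSampling (hσ.max_const s) (hσ.max_const t)
          (fun ω => max_le_max le_rfl hst) (R := T)
          (fun ω => hs0.trans (le_max_right _ _))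
          (fun ω => max_le (hσ_mem ω).2 htT) hCmeas
        linarith
      have hsum_le : ∫ ω in A, (Mbar t ω - stoppedValue (N 0) (fun ω' => min (σ ω') t) ω) ∂μ
          ≤ ∫ ω in A, (Mbar s ω - stoppedValue (N 0) (fun ω' => min (σ ω') s) ω) ∂μ :=
        hasSum_le hterm (hHS t htIcc) (hHS s hsIcc)
      -- first piece
      have hfirst : ∫ ω in A, stoppedValue (N 0) (fun ω' => min (σ ω') t) ω ∂μ
          ≤ ∫ ω in A, stoppedValue (N 0) (fun ω' => min (σ ω') s) ω ∂μ := by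
        set A1 := A ∩ {ω | σ ω ≤ s} with hA1
        set A2 := A ∩ {ω | s < σ ω} with hA2
        have hA1m0 : MeasurableSet A1 := hAm0.inter (ℱ.le s _ (hσ s))
        have hA2m0 : MeasurableSet A2 := by
          have : {ω | s < σ ω} = {ω | σ ω ≤ s}ᶜ := by ext ω; simp
          rw [hA2, this]
          exact hAm0.inter (ℱ.le s _ (hσ s)).compl
        have hsplitA : A = A1 ∪ A2 := by
          ext ω
          simp only [hA1, hA2, Set.mem_union, Set.mem_inter_iff, Set.mem_setOf_eq]
          constructor
          · intro hω; rcases le_or_gt (σ ω) s with h | h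
            · exact Or.inl ⟨hω, h⟩
            · exact Or.inr ⟨hω, h⟩
          · rintro (⟨hω, _⟩ | ⟨hω, _⟩) <;> exact hω
        have hdisj12 : Disjoint A1 A2 := by
          rw [Set.disjoint_left]
          rintro ω ⟨_, h1⟩ ⟨_, h2⟩
          simp only [Set.mem_setOf_eq] at h1 h2
          linarith
        have heqA1 : ∫ ω in A1, stoppedValue (N 0) (fun ω' => min (σ ω') t) ω ∂μ
            = ∫ ω in A1, stoppedValue (N 0) (fun ω' => min (σ ω') s) ω ∂μ := by
          refine setIntegral_congr_fun hA1m0 (fun ω hω => ?_)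
          have hσs : σ ω ≤ s := hω.2
          show stoppedValue (N 0) (fun ω' => min (σ ω') t) ω = _
          rw [stoppedValue, stoppedValue, min_eq_left (hσs.trans hst), min_eq_left hσs]
        have hA2meas : MeasurableSet[(hσ.min_const s).measurableSpace] A2 := by
          rw [IsStoppingTime.measurableSet]
          intro u
          rcases le_or_gt s u with hsu | hus
          · have he : A2 ∩ {ω | min (σ ω) s ≤ u} = A2 :=
              Set.inter_eq_self_of_subset_left
                (fun ω _ => (min_le_right _ _).trans hsu)
            rw [he]
            have : {ω | s < σ ω} = {ω | σ ω ≤ s}ᶜ := by ext ω; simp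
            rw [hA2, this]
            exact ℱ.mono hsu _ (hA.inter (hσ s).compl)
          · have he : A2 ∩ {ω | min (σ ω) s ≤ u} = ∅ := by
              ext ω
              simp only [hA2, Set.mem_inter_iff, Set.mem_setOf_eq, Set.mem_empty_iff_false,
                iff_false, not_and]
              rintro ⟨_, hsσ⟩ hmin
              rw [min_eq_right hsσ.le] at hmin
              linarith
            rw [he]
            exact @MeasurableSet.empty _ (ℱ u)
        have hineqA2 : ∫ ω in A2, stoppedValue (N 0) (fun ω' => min (σ ω') t) ω ∂μ
            ≤ ∫ ω in A2, stoppedValue (N 0) (fun ω' => min (σ ω') s) ω ∂μ :=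
          (hNice 0).optionalSampling (hσ.min_const s) (hσ.min_const t)
            (fun ω => min_le_min le_rfl hst) (R := T)
            (fun ω => le_min (hσ_mem ω).1 hs0)
            (fun ω => (min_le_left _ _).trans (hσ_mem ω).2) hA2meas
        have hsum1 : ∫ ω in A, stoppedValue (N 0) (fun ω' => min (σ ω') t) ω ∂μ
            = ∫ ω in A1, stoppedValue (N 0) (fun ω' => min (σ ω') t) ω ∂μ
            + ∫ ω in A2, stoppedValue (N 0) (fun ω' => min (σ ω') t) ω ∂μ := by
          conv_lhs => rw [hsplitA]
          exact setIntegral_union hdisj12 hA2m0 (hI_ν t htIcc).integrableOn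
            (hI_ν t htIcc).integrableOn
        have hsum2 : ∫ ω in A, stoppedValue (N 0) (fun ω' => min (σ ω') s) ω ∂μ
            = ∫ ω in A1, stoppedValue (N 0) (fun ω' => min (σ ω') s) ω ∂μ
            + ∫ ω in A2, stoppedValue (N 0) (fun ω' => min (σ ω') s) ω ∂μ := by
          conv_lhs => rw [hsplitA]
          exact setIntegral_union hdisj12 hA2m0 (hI_ν s hsIcc).integrableOn
            (hI_ν s hsIcc).integrableOn
        rw [hsum1, hsum2]
        linarith
      -- combine
      have hsub_t : Integrable
          (fun ω => Mbar t ω - stoppedValue (N 0) (fun ω' => min (σ ω') t) ω) μ :=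
        hint_t.sub (hI_ν t htIcc)
      have hsub_s : Integrable
          (fun ω => Mbar s ω - stoppedValue (N 0) (fun ω' => min (σ ω') s) ω) μ :=
        hint_s.sub (hI_ν s hsIcc)
      have he_t : ∫ ω in A, Mbar t ω ∂μ
          = ∫ ω in A, stoppedValue (N 0) (fun ω' => min (σ ω') t) ω ∂μ
          + ∫ ω in A, (Mbar t ω - stoppedValue (N 0) (fun ω' => min (σ ω') t) ω) ∂μ := by
        rw [← integral_add (hI_ν t htIcc).integrableOn hsub_t.integrableOn]
        exact setIntegral_congr_fun hAm0 (fun ω _ => by ring)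
      have he_s : ∫ ω in A, Mbar s ω ∂μ
          = ∫ ω in A, stoppedValue (N 0) (fun ω' => min (σ ω') s) ω ∂μ
          + ∫ ω in A, (Mbar s ω - stoppedValue (N 0) (fun ω' => min (σ ω') s) ω) ∂μ := by
        rw [← integral_add (hI_ν s hsIcc).integrableOn hsub_s.integrableOn]
        exact setIntegral_congr_fun hAm0 (fun ω _ => by ring)
      rw [he_t, he_s]
      linarith
    -- conclude via conditional expectation
    have hMbars_meas : StronglyMeasurable[ℱ s] (Mbar s) := hmeasMbar s hsIcc
    suffices h : 0 ≤ᵐ[μ.trim (ℱ.le s)] (Mbar s - μ[Mbar t|ℱ s]) by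
      have h2 : (μ[Mbar t|ℱ s]) ≤ᵐ[μ.trim (ℱ.le s)] Mbar s := by
        filter_upwards [h] with ω hω
        have : (0:ℝ) ≤ Mbar s ω - (μ[Mbar t|ℱ s]) ω := hω
        linarith
      exact ae_le_of_ae_le_trim h2
    refine ae_nonneg_of_forall_setIntegral_nonneg
      (((hint_s.sub integrable_condExp).trim _
        (hMbars_meas.sub stronglyMeasurable_condExp))) (fun A hA _ => ?_)
    rw [← setIntegral_trim _ (hMbars_meas.sub stronglyMeasurable_condExp) hA,
      integral_sub' hint_s.integrableOn integrable_condExp.integrableOn, sub_nonneg,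
      setIntegral_condExp (ℱ.le s) hint_t hA]
    exact hsetineq A hA
  · -- ============ Mbar 0 = 0 ============
    refine Filter.Eventually.of_forall (fun ω => ?_)
    rw [hMbar 0 ω]
    have h1 : min 0 (σ ω) = 0 := min_eq_left (hσ_mem ω).1
    have h2 : ∀ n : ℕ, (B n).indicator
        (fun ω' => M n (max 0 (σ ω')) ω' - M n (σ ω') ω') ω = 0 := by
      intro n
      by_cases hω : ω ∈ B n
      · rw [Set.indicator_of_mem hω, max_eq_right (hσ_mem ω).1, sub_self]
      · rw [Set.indicator_of_notMem hω]
    rw [h1, hM0 0 ω, tsum_congr h2, tsum_zero, add_zero]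

end PastingAux

/-- Pasting of supermartingales at a stopping time `σ` along a countable
`F_σ`-measurable partition `(B n)`: if each `M n` is a right-continuous supermartingale on
`[0,T]` starting at `0`, and the pasted process
`M̄ t = M 0 (t ∧ σ) + ∑' n, 1_{B n} (M n (t ∨ σ) - M n σ)` is integrable at every
`t ∈ [0,T]`, then `M̄` is a supermartingale on `[0,T]` with `M̄ 0 = 0`.
(The index `0` plays the role of the index `1` in the paper.  The filtration is assumed
complete, as part of the usual conditions.) -/
theorem stmt_1
    {Ω : Type*} {m0 : MeasurableSpace Ω} {μ : Measure Ω} [IsProbabilityMeasure μ]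
    (ℱ : Filtration ℝ m0) (T : ℝ) (hT : 0 < T)
    -- completeness of the filtration (usual conditions)
    (hcomp : ∀ s : Set Ω, μ s = 0 → MeasurableSet[ℱ 0] s)
    -- the stopping time σ with values in [0,T]
    (σ : Ω → ℝ) (hσ : IsStoppingTime ℱ (fun ω => (σ ω : WithTop ℝ))) (hσ_mem : ∀ ω, σ ω ∈ Set.Icc (0:ℝ) T)
    -- the partition (B n) of Ω with B n ∈ F_σ
    (B : ℕ → Set Ω)
    (hB_disj : Pairwise (Function.onFun Disjoint B))
    (hB_cover : (⋃ n, B n) = Set.univ)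
    (hB_meas : ∀ n, MeasurableSet[hσ.measurableSpace] (B n))
    -- the right-continuous supermartingales M n with M n 0 = 0
    (M : ℕ → ℝ → Ω → ℝ)
    (hM_rc : ∀ n ω t, ContinuousWithinAt (fun s => M n s ω) (Set.Ici t) t)
    (hM_adapted : ∀ n, ∀ t ∈ Set.Icc (0:ℝ) T, StronglyMeasurable[ℱ t] (M n t))
    (hM_int : ∀ n, ∀ t ∈ Set.Icc (0:ℝ) T, Integrable (M n t) μ)
    (hM_super : ∀ n, ∀ s t : ℝ, 0 ≤ s → s ≤ t → t ≤ T → μ[M n t | ℱ s] ≤ᵐ[μ] M n s)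
    (hM0 : ∀ n ω, M n 0 ω = 0)
    -- the pasted process
    (Mbar : ℝ → Ω → ℝ)
    (hMbar : ∀ t ω, Mbar t ω = M 0 (min t (σ ω)) ω +
      ∑' n, (B n).indicator (fun ω' => M n (max t (σ ω')) ω' - M n (σ ω') ω') ω)
    (hMbar_int : ∀ t ∈ Set.Icc (0:ℝ) T, Integrable (Mbar t) μ) :
    (∀ t ∈ Set.Icc (0:ℝ) T, StronglyMeasurable[ℱ t] (Mbar t)) ∧
    (∀ s t : ℝ, 0 ≤ s → s ≤ t → t ≤ T → μ[Mbar t | ℱ s] ≤ᵐ[μ] Mbar s) ∧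
    (∀ᵐ ω ∂μ, Mbar 0 ω = 0) := by
  exact PastingAux.stmt_1_aux ℱ T hT hcomp σ (PastingAux.IsStoppingTime.of_wt hσ) hσ_mem B
    hB_disj hB_cover hB_meas M hM_rc hM_adapted hM_int hM_super hM0 Mbar hMbar hMbar_int
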